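/- Let (Z(n)) be the random walk in Z_+^2 with kernel data (μ, μ_0, μ_1, μ_2), killed at 0, and suppose a function κ : Z_+^2 → R satisfies, for fixed positive reals (x̂, ŷ) with P(x̂,ŷ) = 1 and φ_1(x̂,ŷ) = 1: κ(j) = x̂^{j_1} ŷ^{j_2} − P_j(τ_0 < ∞) + (φ_2(x̂,ŷ) − 1)·H_j(0,ŷ) for j ≠ (0,0), and κ(0,0) = φ_0(x̂,ŷ) − P_{(0,0)}(τ_0<∞) + (φ_2(x̂,ŷ)−1)·H_{(0,0)}(0,ŷ), where H_j(0,y) = Σ_{k_2 ≥ 1} g(j,(0,k_2)) y^{k_2} is assumed finite at y = ŷ for all j. Then κ is harmonic for the killed chain: E_j[κ(Z(1)) ; τ_0 > 1] = κ(j) for all j ∈ Z_+^2. -/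

import Mathlib

/-- `n`-step transition function of the (sub)Markov chain with one-step kernel `p`. -/
noncomputable def iterK {S : Type*} [DecidableEq S] (p : S → S → ℝ) : ℕ → S → S → ℝ
  | 0 => fun j k => if j = k then 1 else 0
  | n + 1 => fun j k => ∑' l, iterK p n j l * p l k

/-- One-step kernel of the partially homogeneous random walk in the quadrant `ℤ₊²`. -/
noncomputable def rwStep (μ μ₀ μ₁ μ₂ : ℤ × ℤ → ℝ) (j k : ℕ × ℕ) : ℝ :=
  if j = (0, 0) then μ₀ ((k.1 : ℤ) - (j.1 : ℤ), (k.2 : ℤ) - (j.2 : ℤ))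
  else if j.2 = 0 then μ₁ ((k.1 : ℤ) - (j.1 : ℤ), (k.2 : ℤ) - (j.2 : ℤ))
  else if j.1 = 0 then μ₂ ((k.1 : ℤ) - (j.1 : ℤ), (k.2 : ℤ) - (j.2 : ℤ))
  else μ ((k.1 : ℤ) - (j.1 : ℤ), (k.2 : ℤ) - (j.2 : ℤ))

/-- The quadrant kernel killed at the origin `(0,0)`. -/
noncomputable def rwKill (μ μ₀ μ₁ μ₂ : ℤ × ℤ → ℝ) (j k : ℕ × ℕ) : ℝ :=
  if k = (0, 0) then 0 else rwStep μ μ₀ μ₁ μ₂ j k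

/-- Green function `g(j,k)` of the quadrant walk killed at the origin. -/
noncomputable def rwGreeng (μ μ₀ μ₁ μ₂ : ℤ × ℤ → ℝ) (j k : ℕ × ℕ) : ℝ :=
  ∑' n : ℕ, iterK (rwKill μ μ₀ μ₁ μ₂) n j k

/-- `P_j(τ₀ < ∞)`, the probability of ever hitting the origin (at a time `≥ 1`). -/
noncomputable def rwHit (μ μ₀ μ₁ μ₂ : ℤ × ℤ → ℝ) (j : ℕ × ℕ) : ℝ :=
  ∑' n : ℕ, ∑' l : ℕ × ℕ, iterK (rwKill μ μ₀ μ₁ μ₂) n j l * rwStep μ μ₀ μ₁ μ₂ l (0, 0)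

/-- `H_j(0,y) = ∑_{k₂ ≥ 1} g(j,(0,k₂)) y^{k₂}`. -/
noncomputable def rwHser (μ μ₀ μ₁ μ₂ : ℤ × ℤ → ℝ) (y : ℝ) (j : ℕ × ℕ) : ℝ :=
  ∑' m : ℕ, rwGreeng μ μ₀ μ₁ μ₂ j (0, m + 1) * y ^ (m + 1)

/-- Generating function `∑_k ν(k) x^{k₁} y^{k₂}` of a jump measure on `ℤ²`. -/
noncomputable def genG (ν : ℤ × ℤ → ℝ) (x y : ℝ) : ℝ :=
  ∑' k : ℤ × ℤ, ν k * x ^ k.1 * y ^ k.2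


namespace RWAux

/-- A kernel whose columns have finitely supported "sources": jumps bounded below. -/
def lowBdd (q : ℕ × ℕ → ℕ × ℕ → ℝ) : Prop :=
  ∀ j k : ℕ × ℕ, k.1 + 1 < j.1 ∨ k.2 + 1 < j.2 → q j k = 0

variable {q : ℕ × ℕ → ℕ × ℕ → ℝ}

lemma iterK_zero (j k : ℕ × ℕ) : iterK q 0 j k = if j = k then 1 else 0 := rfl

lemma iterK_succ (n : ℕ) (j k : ℕ × ℕ) :
    iterK q (n + 1) j k = ∑' l, iterK q n j l * q l k := rfl

lemma iterK_nonneg (hq : ∀ j k, 0 ≤ q j k) (n : ℕ) : ∀ j k, 0 ≤ iterK q n j k := by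
  induction n with
  | zero => intro j k; rw [iterK_zero]; split <;> norm_num
  | succ n ih =>
    intro j k
    rw [iterK_succ]
    exact tsum_nonneg fun l => mul_nonneg (ih j l) (hq l k)

lemma iterK_eq_zero (hq : lowBdd q) (n : ℕ) :
    ∀ j k : ℕ × ℕ, k.1 + n < j.1 ∨ k.2 + n < j.2 → iterK q n j k = 0 := by
  induction n with
  | zero =>
    intro j k h
    rw [iterK_zero, if_neg]
    rintro rfl; omega
  | succ n ih =>
    intro j k h
    rw [iterK_succ]
    have hz : ∀ l : ℕ × ℕ, iterK q n j l * q l k = 0 := by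
      intro l
      by_cases hl : l.1 + n < j.1 ∨ l.2 + n < j.2
      · rw [ih j l hl, zero_mul]
      · push_neg at hl
        rw [hq l k (by omega), mul_zero]
    simp only [hz, tsum_zero]

/-- The box of points `< a` and `< b` componentwise. -/
def box (a b : ℕ) : Finset (ℕ × ℕ) := Finset.range a ×ˢ Finset.range b

lemma mem_box {a b : ℕ} {l : ℕ × ℕ} : l ∈ box a b ↔ l.1 < a ∧ l.2 < b := by
  simp [box, Finset.mem_product]

lemma iterK_succ_left (hq : lowBdd q) (n : ℕ) (j k : ℕ × ℕ) :
    iterK q (n + 1) j k = ∑' l, q j l * iterK q n l k := by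
  induction n generalizing j k with
  | zero =>
    rw [iterK_succ]
    rw [tsum_eq_single j (fun l hl => by rw [iterK_zero, if_neg (Ne.symm hl), zero_mul])]
    rw [tsum_eq_single k (fun l hl => by rw [iterK_zero, if_neg hl, mul_zero])]
    rw [iterK_zero, iterK_zero, if_pos rfl, if_pos rfl, one_mul, mul_one]
  | succ n ih =>
    rw [iterK_succ]
    rw [tsum_eq_sum (s := box (k.1 + 2) (k.2 + 2)) (fun l hl => by
      rw [mem_box] at hl; rw [hq l k (by omega), mul_zero])]
    have e2 : ∀ l ∈ box (k.1 + 2) (k.2 + 2), iterK q (n + 1) j l * q l k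
        = (∑ m ∈ box (k.1 + n + 3) (k.2 + n + 3), q j m * iterK q n m l) * q l k := by
      intro l hl
      rw [ih j l, tsum_eq_sum (s := box (k.1 + n + 3) (k.2 + n + 3)) (fun m hm => by
        rw [mem_box] at hl hm
        rw [iterK_eq_zero hq n m l (by omega), mul_zero])]
    rw [Finset.sum_congr rfl e2]
    simp_rw [Finset.sum_mul]
    rw [Finset.sum_comm]
    simp_rw [mul_assoc, ← Finset.mul_sum]
    have e3 : ∀ m ∈ box (k.1 + n + 3) (k.2 + n + 3),
        q j m * ∑ l ∈ box (k.1 + 2) (k.2 + 2), iterK q n m l * q l k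
          = q j m * iterK q (n + 1) m k := by
      intro m _
      congr 1
      rw [iterK_succ]
      exact (tsum_eq_sum (fun l hl => by
        rw [mem_box] at hl; rw [hq l k (by omega), mul_zero])).symm
    rw [Finset.sum_congr rfl e3]
    exact (tsum_eq_sum (fun m hm => by
      rw [mem_box] at hm
      rw [iterK_eq_zero hq (n + 1) m k (by omega), mul_zero])).symm


section Green

variable (hq : lowBdd q) (hqnn : ∀ j k, 0 ≤ q j k)
  (hg : ∀ j k : ℕ × ℕ, Summable (fun n : ℕ => iterK q n j k))

include hq in
lemma slice_summable (j l : ℕ × ℕ) (n : ℕ) :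
    Summable (fun k => q j k * iterK q n k l) :=
  summable_of_ne_finset_zero (s := box (l.1 + n + 1) (l.2 + n + 1)) (fun k hk => by
    rw [mem_box] at hk
    rw [iterK_eq_zero hq n k l (by omega), mul_zero])

include hq hqnn hg in
lemma green_prod_summable (j l : ℕ × ℕ) :
    Summable (fun x : ℕ × (ℕ × ℕ) => q j x.2 * iterK q x.1 x.2 l) := by
  apply (summable_prod_of_nonneg
    (fun x => mul_nonneg (hqnn _ _) (iterK_nonneg hqnn _ _ _))).2
  refine ⟨fun n => slice_summable hq j l n, ?_⟩
  have e : (fun n => ∑' k, q j k * iterK q n k l) = fun n => iterK q (n + 1) j l := by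
    funext n; exact (iterK_succ_left hq n j l).symm
  rw [e]
  exact (summable_nat_add_iff 1).2 (hg j l)

include hq hqnn hg in
lemma summable_q_green (j l : ℕ × ℕ) :
    Summable (fun k => q j k * ∑' n, iterK q n k l) := by
  have hs := green_prod_summable hq hqnn hg j l
  have hs2 : Summable (fun x : (ℕ × ℕ) × ℕ => q j x.1 * iterK q x.2 x.1 l) := by
    have := (Equiv.prodComm (ℕ × ℕ) ℕ).summable_iff
      (f := fun x : ℕ × (ℕ × ℕ) => q j x.2 * iterK q x.1 x.2 l)
    exact this.2 hs
  have h2 := ((summable_prod_of_nonneg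
    (fun x => mul_nonneg (hqnn _ _) (iterK_nonneg hqnn _ _ _))).1 hs2).2
  have e : (fun k : ℕ × ℕ => ∑' n, q j k * iterK q n k l)
      = fun k => q j k * ∑' n, iterK q n k l := by
    funext k; exact tsum_mul_left
  rwa [e] at h2

include hq hqnn hg in
lemma green_step (j l : ℕ × ℕ) :
    ∑' k, q j k * ∑' n, iterK q n k l
      = (∑' n, iterK q n j l) - (if j = l then 1 else 0) := by
  have hs := green_prod_summable hq hqnn hg j l
  calc ∑' k, q j k * ∑' n, iterK q n k l
      = ∑' (k : ℕ × ℕ) (n : ℕ), q j k * iterK q n k l :=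
        tsum_congr fun k => tsum_mul_left.symm
    _ = ∑' (n : ℕ) (k : ℕ × ℕ), q j k * iterK q n k l := by
        exact Summable.tsum_comm (f := fun (n : ℕ) (k : ℕ × ℕ) => q j k * iterK q n k l) hs
    _ = ∑' n, iterK q (n + 1) j l := tsum_congr fun n => (iterK_succ_left hq n j l).symm
    _ = (∑' n, iterK q n j l) - iterK q 0 j l := by
        rw [Summable.tsum_eq_zero_add (hg j l)]; ring
    _ = _ := by rw [iterK_zero]

end Green


lemma shift_sum (ν : ℤ × ℤ → ℝ) (xh yh : ℝ) (hxh : 0 < xh) (hyh : 0 < yh)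
    (hs : Summable (fun k : ℤ × ℤ => ν k * xh ^ k.1 * yh ^ k.2)) (j : ℕ × ℕ)
    (hsupp : ∀ d : ℤ × ℤ, d.1 < -(j.1 : ℤ) ∨ d.2 < -(j.2 : ℤ) → ν d = 0) :
    Summable (fun k : ℕ × ℕ =>
        ν ((k.1 : ℤ) - (j.1 : ℤ), (k.2 : ℤ) - (j.2 : ℤ)) * xh ^ k.1 * yh ^ k.2)
    ∧ ∑' k : ℕ × ℕ, ν ((k.1 : ℤ) - (j.1 : ℤ), (k.2 : ℤ) - (j.2 : ℤ)) * xh ^ k.1 * yh ^ k.2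
      = xh ^ j.1 * yh ^ j.2 * ∑' k : ℤ × ℤ, ν k * xh ^ k.1 * yh ^ k.2 := by
  set i : ℕ × ℕ → ℤ × ℤ := fun k => ((k.1 : ℤ) - (j.1 : ℤ), (k.2 : ℤ) - (j.2 : ℤ)) with hi
  have hinj : Function.Injective i := by
    intro a b hab
    rw [hi, Prod.ext_iff] at hab
    simp only at hab
    rw [Prod.ext_iff]
    omega
  set F : ℤ × ℤ → ℝ := fun d => (ν d * xh ^ d.1 * yh ^ d.2) * (xh ^ (j.1 : ℤ) * yh ^ (j.2 : ℤ))
    with hF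
  have hFs : Summable F := hs.mul_right _
  have hcomp : ∀ k : ℕ × ℕ, F (i k) = ν (i k) * xh ^ k.1 * yh ^ k.2 := by
    intro k
    rw [hF]
    simp only [hi]
    rw [← zpow_natCast xh k.1, ← zpow_natCast yh k.2]
    have e1 : xh ^ ((k.1 : ℤ) - (j.1 : ℤ)) * xh ^ (j.1 : ℤ) = xh ^ (k.1 : ℤ) := by
      rw [← zpow_add₀ hxh.ne', sub_add_cancel]
    have e2 : yh ^ ((k.2 : ℤ) - (j.2 : ℤ)) * yh ^ (j.2 : ℤ) = yh ^ (k.2 : ℤ) := by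
      rw [← zpow_add₀ hyh.ne', sub_add_cancel]
    calc ν ((k.1 : ℤ) - (j.1 : ℤ), (k.2 : ℤ) - (j.2 : ℤ)) *
          xh ^ ((k.1 : ℤ) - (j.1 : ℤ)) * yh ^ ((k.2 : ℤ) - (j.2 : ℤ)) *
          (xh ^ (j.1 : ℤ) * yh ^ (j.2 : ℤ))
        = ν ((k.1 : ℤ) - (j.1 : ℤ), (k.2 : ℤ) - (j.2 : ℤ)) *
            (xh ^ ((k.1 : ℤ) - (j.1 : ℤ)) * xh ^ (j.1 : ℤ)) *
            (yh ^ ((k.2 : ℤ) - (j.2 : ℤ)) * yh ^ (j.2 : ℤ)) := by ring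
      _ = _ := by rw [e1, e2]
  have hrange : Function.support F ⊆ Set.range i := by
    intro d hd
    by_contra hcon
    apply hd
    have hor : d.1 < -(j.1 : ℤ) ∨ d.2 < -(j.2 : ℤ) := by
      by_contra h2
      push_neg at h2
      exact hcon ⟨((d.1 + j.1).toNat, (d.2 + j.2).toNat), by
        rw [hi, Prod.ext_iff]; simp only; constructor <;> omega⟩
    rw [hF]
    simp only
    rw [hsupp d hor]
    ring
  constructor
  · have h1 := hFs.comp_injective hinj
    have e : (F ∘ i) = fun k : ℕ × ℕ => ν (i k) * xh ^ k.1 * yh ^ k.2 := by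
      funext k; exact hcomp k
    rwa [e] at h1
  · calc ∑' k : ℕ × ℕ, ν (i k) * xh ^ k.1 * yh ^ k.2
        = ∑' k : ℕ × ℕ, F (i k) := tsum_congr fun k => (hcomp k).symm
      _ = ∑' d : ℤ × ℤ, F d := hinj.tsum_eq hrange
      _ = (∑' k : ℤ × ℤ, ν k * xh ^ k.1 * yh ^ k.2) * (xh ^ (j.1 : ℤ) * yh ^ (j.2 : ℤ)) :=
          tsum_mul_right
      _ = _ := by rw [zpow_natCast, zpow_natCast]; ring

end RWAux


set_option maxHeartbeats 2000000 in
open RWAux in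
/-- The function `κ(j) = x̂^{j₁} ŷ^{j₂} − P_j(τ₀<∞) + (φ₂(x̂,ŷ)−1) H_j(0,ŷ)`
(suitably modified at the origin), with `P(x̂,ŷ) = φ₁(x̂,ŷ) = 1`, is harmonic for the
quadrant walk killed at the origin. -/
theorem kappa1_harmonic_for_killed_walk
    (μ μ₀ μ₁ μ₂ : ℤ × ℤ → ℝ)
    (hnn : ∀ k, 0 ≤ μ k) (h₀nn : ∀ k, 0 ≤ μ₀ k) (h₁nn : ∀ k, 0 ≤ μ₁ k)
    (h₂nn : ∀ k, 0 ≤ μ₂ k)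
    (hμ : ∑' k : ℤ × ℤ, μ k = 1)
    (hμ₀ : ∑' k : ℤ × ℤ, μ₀ k ≤ 1) (hμ₁ : ∑' k : ℤ × ℤ, μ₁ k ≤ 1)
    (hμ₂ : ∑' k : ℤ × ℤ, μ₂ k ≤ 1)
    (hμsupp : ∀ k : ℤ × ℤ, k.1 < -1 ∨ k.2 < -1 → μ k = 0)
    (hμ₁supp : ∀ k : ℤ × ℤ, k.1 < -1 ∨ k.2 < 0 → μ₁ k = 0)
    (hμ₂supp : ∀ k : ℤ × ℤ, k.1 < 0 ∨ k.2 < -1 → μ₂ k = 0)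
    (hμ₀supp : ∀ k : ℤ × ℤ, k.1 < 0 ∨ k.2 < 0 → μ₀ k = 0)
    (xh yh : ℝ) (hxh : 0 < xh) (hyh : 0 < yh)
    (hProot : genG μ xh yh = 1) (hφ₁root : genG μ₁ xh yh = 1)
    (hsum : Summable (fun k : ℤ × ℤ => μ k * xh ^ k.1 * yh ^ k.2))
    (hsum₀ : Summable (fun k : ℤ × ℤ => μ₀ k * xh ^ k.1 * yh ^ k.2))
    (hsum₁ : Summable (fun k : ℤ × ℤ => μ₁ k * xh ^ k.1 * yh ^ k.2))
    (hsum₂ : Summable (fun k : ℤ × ℤ => μ₂ k * xh ^ k.1 * yh ^ k.2))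
    (hGreen : ∀ j k : ℕ × ℕ, Summable (fun n : ℕ => iterK (rwKill μ μ₀ μ₁ μ₂) n j k))
    (hH : ∀ j : ℕ × ℕ,
      Summable (fun m : ℕ => rwGreeng μ μ₀ μ₁ μ₂ j (0, m + 1) * yh ^ (m + 1)))
    (κ : ℕ × ℕ → ℝ)
    (hκ : ∀ j : ℕ × ℕ, j ≠ (0, 0) →
      κ j = xh ^ j.1 * yh ^ j.2 - rwHit μ μ₀ μ₁ μ₂ j +
        (genG μ₂ xh yh - 1) * rwHser μ μ₀ μ₁ μ₂ yh j)
    (hκ0 : κ (0, 0) = genG μ₀ xh yh - rwHit μ μ₀ μ₁ μ₂ (0, 0) +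
        (genG μ₂ xh yh - 1) * rwHser μ μ₀ μ₁ μ₂ yh (0, 0)) :
    ∀ j : ℕ × ℕ, ∑' k : ℕ × ℕ, rwKill μ μ₀ μ₁ μ₂ j k * κ k = κ j := by
  classical
  set P := rwStep μ μ₀ μ₁ μ₂ with hP
  set Q := rwKill μ μ₀ μ₁ μ₂ with hQ
  -- kernel facts
  have hPnn : ∀ j k, 0 ≤ P j k := by
    intro j k
    rw [hP]
    unfold rwStep
    split_ifs
    · exact h₀nn _
    · exact h₁nn _
    · exact h₂nn _
    · exact hnn _
  have hQnn : ∀ j k, 0 ≤ Q j k := by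
    intro j k
    rw [hQ]
    unfold rwKill
    split_ifs
    · exact le_refl 0
    · exact hPnn j k
  have hPlb : lowBdd P := by
    intro j k hjk
    rw [hP]
    unfold rwStep
    split_ifs with h1 h2 h3
    · exfalso; rw [h1] at hjk; simp at hjk
    · apply hμ₁supp
      rcases hjk with h | h
      · left; push_cast; omega
      · exfalso; omega
    · apply hμ₂supp
      rcases hjk with h | h
      · exfalso; omega
      · right; push_cast; omega
    · apply hμsupp
      rcases hjk with h | h
      · left; push_cast; omega
      · right; push_cast; omega
  have hQlb : lowBdd Q := by
    intro j k hjk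
    rw [hQ]
    unfold rwKill
    split_ifs
    · rfl
    · exact hPlb j k hjk
  have hQP : ∀ j k, Q j k = if k = (0,0) then 0 else P j k := fun j k => rfl
  have grd : ∀ j k : ℕ × ℕ, rwGreeng μ μ₀ μ₁ μ₂ j k = ∑' n, iterK Q n j k :=
    fun _ _ => rfl
  have SG : ∀ j l : ℕ × ℕ, Summable (fun k => Q j k * ∑' n, iterK Q n k l) :=
    fun j l => summable_q_green hQlb hQnn hGreen j l
  have green : ∀ j l : ℕ × ℕ, ∑' k, Q j k * ∑' n, iterK Q n k l
      = (∑' n, iterK Q n j l) - (if j = l then 1 else 0) :=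
    fun j l => green_step hQlb hQnn hGreen j l
  -- Hit decomposition over the finite box
  have hPbox : ∀ l : ℕ × ℕ, l ∉ box 2 2 → P l (0, 0) = 0 := by
    intro l hl
    rw [mem_box] at hl
    exact hPlb l (0, 0) (by simp only [Prod.fst, Prod.snd]; omega)
  have hitEq : ∀ j : ℕ × ℕ, rwHit μ μ₀ μ₁ μ₂ j
      = ∑ l ∈ box 2 2, (∑' n, iterK Q n j l) * P l (0, 0) := by
    intro j
    have e1 : rwHit μ μ₀ μ₁ μ₂ j = ∑' n, ∑' l, iterK Q n j l * P l (0, 0) := rfl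
    rw [e1]
    have e2 : ∀ n : ℕ, ∑' l, iterK Q n j l * P l (0, 0)
        = ∑ l ∈ box 2 2, iterK Q n j l * P l (0, 0) :=
      fun n => tsum_eq_sum (fun l hl => by rw [hPbox l hl, mul_zero])
    rw [tsum_congr e2]
    rw [Summable.tsum_finsetSum (fun l _ => (hGreen j l).mul_right _)]
    exact Finset.sum_congr rfl fun l _ => tsum_mul_right
  -- B part
  have Bpart : ∀ j : ℕ × ℕ,
      Summable (fun k => Q j k * rwHit μ μ₀ μ₁ μ₂ k) ∧
      ∑' k, Q j k * rwHit μ μ₀ μ₁ μ₂ k = rwHit μ μ₀ μ₁ μ₂ j - P j (0, 0) := by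
    intro j
    have eqHit : ∀ k : ℕ × ℕ, Q j k * rwHit μ μ₀ μ₁ μ₂ k
        = ∑ l ∈ box 2 2, (Q j k * ∑' n, iterK Q n k l) * P l (0, 0) := by
      intro k
      rw [hitEq k, Finset.mul_sum]
      exact Finset.sum_congr rfl fun l _ => by ring
    constructor
    · rw [show (fun k => Q j k * rwHit μ μ₀ μ₁ μ₂ k)
        = fun k => ∑ l ∈ box 2 2, (Q j k * ∑' n, iterK Q n k l) * P l (0, 0) from
          funext eqHit]
      exact summable_sum fun l _ => (SG j l).mul_right _
    · rw [tsum_congr eqHit]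
      rw [Summable.tsum_finsetSum (fun l _ => (SG j l).mul_right _)]
      have e3 : ∀ l ∈ box 2 2, (∑' k, (Q j k * ∑' n, iterK Q n k l) * P l (0, 0))
          = ((∑' n, iterK Q n j l) - (if j = l then 1 else 0)) * P l (0, 0) := by
        intro l _
        rw [tsum_mul_right, green j l]
      rw [Finset.sum_congr rfl e3]
      rw [show (fun l => ((∑' n, iterK Q n j l) - (if j = l then (1:ℝ) else 0)) * P l (0, 0))
        = fun l => (∑' n, iterK Q n j l) * P l (0, 0)
            - (if j = l then P l (0,0) else 0) from funext fun l => by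
          split_ifs <;> ring]
      rw [Finset.sum_sub_distrib, Finset.sum_ite_eq, hitEq j]
      congr 1
      split_ifs with hmem
      · rfl
      · exact (hPbox j hmem).symm
  -- C part
  have Cpart : ∀ j : ℕ × ℕ,
      Summable (fun k => Q j k * rwHser μ μ₀ μ₁ μ₂ yh k) ∧
      ∑' k, Q j k * rwHser μ μ₀ μ₁ μ₂ yh k
        = rwHser μ μ₀ μ₁ μ₂ yh j
          - ∑' m : ℕ, (if j = (0, m + 1) then (1:ℝ) else 0) * yh ^ (m + 1) := by
    intro j
    set f : ℕ × (ℕ × ℕ) → ℝ :=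
      fun x => (Q j x.2 * ∑' n, iterK Q n x.2 (0, x.1 + 1)) * yh ^ (x.1 + 1) with hf
    have hfnn : 0 ≤ f := by
      rw [Pi.le_def]
      intro x
      simp only [hf, Pi.zero_apply]
      exact mul_nonneg (mul_nonneg (hQnn _ _)
        (tsum_nonneg fun n => iterK_nonneg hQnn n _ _)) (by positivity)
    have hslice : ∀ m, Summable fun k => f (m, k) := by
      intro m
      simp only [hf]
      exact (SG j (0, m + 1)).mul_right _
    have hmarg : ∀ m : ℕ, ∑' k, f (m, k)
        = ((∑' n, iterK Q n j (0, m + 1)) - (if j = (0, m + 1) then 1 else 0)) * yh ^ (m + 1) := by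
      intro m
      simp only [hf]
      rw [tsum_mul_right, green j (0, m + 1)]
    have hsumdelta : Summable (fun m : ℕ => (if j = (0, m + 1) then (1:ℝ) else 0) * yh ^ (m + 1)) :=
      summable_of_ne_finset_zero (s := {j.2 - 1}) (fun m hm => by
        rw [if_neg, zero_mul]
        intro h
        exact hm (by rw [h]; simp))
    have hHj : ∀ i : ℕ × ℕ, Summable (fun m : ℕ => (∑' n, iterK Q n i (0, m + 1)) * yh ^ (m + 1)) := by
      intro i
      have := hH i
      rw [show (fun m : ℕ => rwGreeng μ μ₀ μ₁ μ₂ i (0, m + 1) * yh ^ (m + 1))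
        = fun m : ℕ => (∑' n, iterK Q n i (0, m + 1)) * yh ^ (m + 1) from
          funext fun m => by rw [grd]] at this
      exact this
    have hmargS : Summable fun m => ∑' k, f (m, k) := by
      rw [show (fun m => ∑' k, f (m, k)) = fun m =>
        ((∑' n, iterK Q n j (0, m + 1)) * yh ^ (m + 1)
          - (if j = (0, m + 1) then (1:ℝ) else 0) * yh ^ (m + 1)) from funext fun m => by
          rw [hmarg m]; ring]
      exact (hHj j).sub hsumdelta
    have hfs : Summable f := (summable_prod_of_nonneg hfnn).2 ⟨hslice, hmargS⟩
    have hfs2 : Summable (fun x : (ℕ × ℕ) × ℕ => f (x.2, x.1)) := by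
      have h := ((Equiv.prodComm (ℕ × ℕ) ℕ).summable_iff (f := f)).2 hfs
      exact h
    have hinner : ∀ k : ℕ × ℕ, ∑' m, f (m, k) = Q j k * rwHser μ μ₀ μ₁ μ₂ yh k := by
      intro k
      simp only [hf]
      rw [show (fun m : ℕ => Q j k * (∑' n, iterK Q n k (0, m + 1)) * yh ^ (m + 1))
          = fun m : ℕ => Q j k * ((∑' n, iterK Q n k (0, m + 1)) * yh ^ (m + 1)) from
        funext fun m => by ring]
      rw [tsum_mul_left]
      have e : rwHser μ μ₀ μ₁ μ₂ yh k
          = ∑' m : ℕ, (∑' n, iterK Q n k (0, m + 1)) * yh ^ (m + 1) :=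
        tsum_congr fun m => by rw [grd]
      rw [e]
    constructor
    · have h2 := ((summable_prod_of_nonneg (f := fun x : (ℕ × ℕ) × ℕ => f (x.2, x.1))
        (fun x => hfnn (x.2, x.1))).1 hfs2).2
      exact h2.congr fun k => hinner k
    · calc ∑' k, Q j k * rwHser μ μ₀ μ₁ μ₂ yh k
          = ∑' (k : ℕ × ℕ) (m : ℕ), f (m, k) := (tsum_congr hinner).symm
        _ = ∑' (m : ℕ) (k : ℕ × ℕ), f (m, k) :=
            Summable.tsum_comm (f := fun (m : ℕ) (k : ℕ × ℕ) => f (m, k)) hfs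
        _ = ∑' m : ℕ, ((∑' n, iterK Q n j (0, m + 1))
              - (if j = (0, m + 1) then 1 else 0)) * yh ^ (m + 1) := tsum_congr hmarg
        _ = _ := by
            rw [show (fun m : ℕ => ((∑' n, iterK Q n j (0, m + 1))
                - (if j = (0, m + 1) then (1:ℝ) else 0)) * yh ^ (m + 1))
              = fun m => (∑' n, iterK Q n j (0, m + 1)) * yh ^ (m + 1)
                  - (if j = (0, m + 1) then (1:ℝ) else 0) * yh ^ (m + 1) from
                funext fun m => by ring]
            rw [Summable.tsum_sub (hHj j) hsumdelta,
              show rwHser μ μ₀ μ₁ μ₂ yh j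
                  = ∑' m : ℕ, (∑' n, iterK Q n j (0, m + 1)) * yh ^ (m + 1)
                from tsum_congr fun m => by rw [grd]]
  intro j
  obtain ⟨SB, eqB⟩ := Bpart j
  obtain ⟨SC, eqC⟩ := Cpart j
  set E : ℝ := ∑' m : ℕ, (if j = (0, m + 1) then (1:ℝ) else 0) * yh ^ (m + 1) with hEdef
  have hgen : ∀ ν : ℤ × ℤ → ℝ, genG ν xh yh = ∑' k : ℤ × ℤ, ν k * xh ^ k.1 * yh ^ k.2 :=
    fun ν => rfl
  have main : ∀ ν : ℤ × ℤ → ℝ,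
      Summable (fun k : ℤ × ℤ => ν k * xh ^ k.1 * yh ^ k.2) →
      (∀ d : ℤ × ℤ, d.1 < -(j.1 : ℤ) ∨ d.2 < -(j.2 : ℤ) → ν d = 0) →
      (∀ k : ℕ × ℕ, P j k = ν ((k.1 : ℤ) - (j.1 : ℤ), (k.2 : ℤ) - (j.2 : ℤ))) →
      ∑' k, Q j k * κ k
        = xh ^ j.1 * yh ^ j.2 * genG ν xh yh - rwHit μ μ₀ μ₁ μ₂ j
          + (genG μ₂ xh yh - 1) * (rwHser μ μ₀ μ₁ μ₂ yh j - E) := by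
    intro ν hs hsupp hker
    obtain ⟨s1, s2⟩ := shift_sum ν xh yh hxh hyh hs j hsupp
    have SP : Summable (fun k : ℕ × ℕ => P j k * (xh ^ k.1 * yh ^ k.2)) :=
      s1.congr fun k => by rw [hker k]; ring
    have vP : ∑' k : ℕ × ℕ, P j k * (xh ^ k.1 * yh ^ k.2)
        = xh ^ j.1 * yh ^ j.2 * genG ν xh yh := by
      rw [tsum_congr (fun k : ℕ × ℕ =>
        show P j k * (xh ^ k.1 * yh ^ k.2)
            = ν ((k.1 : ℤ) - (j.1 : ℤ), (k.2 : ℤ) - (j.2 : ℤ)) * xh ^ k.1 * yh ^ k.2 from by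
          rw [hker k]; ring), hgen ν]
      exact s2
    have Site : Summable (fun k : ℕ × ℕ => if k = ((0, 0) : ℕ × ℕ) then P j (0, 0) else 0) :=
      summable_of_ne_finset_zero (s := {((0, 0) : ℕ × ℕ)}) (fun k hk => if_neg (by simpa using hk))
    have hsplit : ∀ k : ℕ × ℕ, P j k * (xh ^ k.1 * yh ^ k.2)
        = Q j k * (xh ^ k.1 * yh ^ k.2) + (if k = ((0, 0) : ℕ × ℕ) then P j (0, 0) else 0) := by
      intro k
      rw [hQP j k]
      split_ifs with hk
      · subst hk; simp
      · ring
    have SQΦ : Summable (fun k : ℕ × ℕ => Q j k * (xh ^ k.1 * yh ^ k.2)) := by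
      apply (SP.sub Site).congr
      intro k
      rw [hsplit k]
      ring
    have eqAQ : ∑' k : ℕ × ℕ, Q j k * (xh ^ k.1 * yh ^ k.2)
        = xh ^ j.1 * yh ^ j.2 * genG ν xh yh - P j (0, 0) := by
      have h := tsum_congr (L := SummationFilter.unconditional _) hsplit
      rw [Summable.tsum_add SQΦ Site, tsum_ite_eq, vP] at h
      linarith
    have hκQ : ∀ k, Q j k * κ k
        = Q j k * (xh ^ k.1 * yh ^ k.2) - Q j k * rwHit μ μ₀ μ₁ μ₂ k
          + (genG μ₂ xh yh - 1) * (Q j k * rwHser μ μ₀ μ₁ μ₂ yh k) := by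
      intro k
      by_cases hk : k = (0, 0)
      · subst hk
        rw [hQP]
        simp
      · rw [hκ k hk]; ring
    calc ∑' k, Q j k * κ k
        = ∑' k, (Q j k * (xh ^ k.1 * yh ^ k.2) - Q j k * rwHit μ μ₀ μ₁ μ₂ k
            + (genG μ₂ xh yh - 1) * (Q j k * rwHser μ μ₀ μ₁ μ₂ yh k)) := tsum_congr hκQ
      _ = (∑' k, Q j k * (xh ^ k.1 * yh ^ k.2)) - (∑' k, Q j k * rwHit μ μ₀ μ₁ μ₂ k)
            + (genG μ₂ xh yh - 1) * ∑' k, Q j k * rwHser μ μ₀ μ₁ μ₂ yh k := by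
          rw [Summable.tsum_add (SQΦ.sub SB) (SC.mul_left _), Summable.tsum_sub SQΦ SB, tsum_mul_left]
      _ = _ := by rw [eqAQ, eqB, eqC]; ring
  by_cases hj0 : j = (0, 0)
  · have hker : ∀ k : ℕ × ℕ, P j k = μ₀ ((k.1 : ℤ) - (j.1 : ℤ), (k.2 : ℤ) - (j.2 : ℤ)) := by
      intro k
      rw [hP]
      unfold rwStep
      rw [if_pos hj0]
    have hsupp : ∀ d : ℤ × ℤ, d.1 < -(j.1 : ℤ) ∨ d.2 < -(j.2 : ℤ) → μ₀ d = 0 := by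
      intro d hd
      apply hμ₀supp
      rw [hj0] at hd
      simpa using hd
    have hE : E = 0 := by
      rw [hEdef]
      rw [tsum_congr (fun m : ℕ => show (if j = (0, m + 1) then (1:ℝ) else 0) * yh ^ (m + 1) = 0
        from by
          rw [if_neg, zero_mul]
          intro h
          have h2 := congrArg Prod.snd h
          rw [hj0] at h2
          simp at h2)]
      exact tsum_zero
    rw [main μ₀ hsum₀ hsupp hker, hE, hj0, hκ0]
    norm_num
  · by_cases hj2 : j.2 = 0
    · have hj1pos : 0 < j.1 := by
        rcases Nat.eq_zero_or_pos j.1 with h | h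
        · exact absurd (Prod.ext h hj2) hj0
        · exact h
      have hker : ∀ k : ℕ × ℕ, P j k = μ₁ ((k.1 : ℤ) - (j.1 : ℤ), (k.2 : ℤ) - (j.2 : ℤ)) := by
        intro k
        rw [hP]
        unfold rwStep
        rw [if_neg hj0, if_pos hj2]
      have hsupp : ∀ d : ℤ × ℤ, d.1 < -(j.1 : ℤ) ∨ d.2 < -(j.2 : ℤ) → μ₁ d = 0 := by
        intro d hd
        apply hμ₁supp
        rcases hd with h | h
        · left; omega
        · right; omega
      have hE : E = 0 := by
        rw [hEdef]
        rw [tsum_congr (fun m : ℕ => show (if j = (0, m + 1) then (1:ℝ) else 0) * yh ^ (m + 1) = 0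
          from by
            rw [if_neg, zero_mul]
            intro h
            rw [h] at hj2
            simp at hj2)]
        exact tsum_zero
      rw [main μ₁ hsum₁ hsupp hker, hφ₁root, hE, hκ j hj0]
      ring
    · by_cases hj1 : j.1 = 0
      · have hj2pos : 0 < j.2 := Nat.pos_of_ne_zero hj2
        have hker : ∀ k : ℕ × ℕ, P j k = μ₂ ((k.1 : ℤ) - (j.1 : ℤ), (k.2 : ℤ) - (j.2 : ℤ)) := by
          intro k
          rw [hP]
          unfold rwStep
          rw [if_neg hj0, if_neg hj2, if_pos hj1]
        have hsupp : ∀ d : ℤ × ℤ, d.1 < -(j.1 : ℤ) ∨ d.2 < -(j.2 : ℤ) → μ₂ d = 0 := by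
          intro d hd
          apply hμ₂supp
          rcases hd with h | h
          · left; omega
          · right; omega
        have hE : E = yh ^ j.2 := by
          rw [hEdef]
          rw [tsum_eq_single (j.2 - 1) (fun m hm => by
            rw [if_neg, zero_mul]
            intro h
            have h2 := congrArg Prod.snd h
            simp only at h2
            omega)]
          have h3 : j.2 - 1 + 1 = j.2 := by omega
          have hjj : j = (0, j.2) := by
            rcases j with ⟨a, b⟩
            simp_all
          rw [h3, if_pos hjj, one_mul]
        rw [main μ₂ hsum₂ hsupp hker, hE, hκ j hj0, hj1, pow_zero]
        ring
      · have hker : ∀ k : ℕ × ℕ, P j k = μ ((k.1 : ℤ) - (j.1 : ℤ), (k.2 : ℤ) - (j.2 : ℤ)) := by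
          intro k
          rw [hP]
          unfold rwStep
          rw [if_neg hj0, if_neg hj2, if_neg hj1]
        have hsupp : ∀ d : ℤ × ℤ, d.1 < -(j.1 : ℤ) ∨ d.2 < -(j.2 : ℤ) → μ d = 0 := by
          intro d hd
          apply hμsupp
          have h1 : 0 < j.1 := Nat.pos_of_ne_zero hj1
          have h2 : 0 < j.2 := Nat.pos_of_ne_zero hj2
          rcases hd with h | h
          · left; omega
          · right; omega
        have hE : E = 0 := by
          rw [hEdef]
          rw [tsum_congr (fun m : ℕ => show (if j = (0, m + 1) then (1:ℝ) else 0) * yh ^ (m + 1) = 0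
            from by
              rw [if_neg, zero_mul]
              intro h
              have h2 := congrArg Prod.fst h
              simp only at h2
              exact hj1 h2)]
          exact tsum_zero
        rw [main μ hsum hsupp hker, hProot, hE, hκ j hj0]
        ring
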